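/- Let n ≥ 1 be an integer and let χ : A → ℂ be a ℚ-algebra homomorphism from the group algebra A = ℚ[ℚ/ℤ] to the complex numbers such that χ(e_{1/n}) = 1, where 1/n denotes the class of (n)⁻¹ ∈ ℚ in ℚ/ℤ. Then for every r ∈ ℚ/ℤ and every s ∈ ℚ/ℤ with n • s = r, one has χ(ρₙ(e_r)) = χ(e_s). -/

import Mathlib

open AddMonoidAlgebra

/-- The rational group algebra `A = ℚ[ℚ/ℤ]` of `ℚ/ℤ = AddCircle (1 : ℚ)`. -/
abbrev BC.A : Type := AddMonoidAlgebra ℚ (AddCircle (1 : ℚ))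

/-- The Bost–Connes map `ρₙ : A → A`, the `ℚ`-linear map determined on the canonical
basis elements `e_r = single r 1` by `ρₙ(e_r) = (1/n) ∑_{s : n • s = r} e_s`, the
(finite) sum running over the `n` solutions `s ∈ ℚ/ℤ` of `n • s = r`. -/
noncomputable def BC.rho (n : ℕ) : BC.A →ₗ[ℚ] BC.A :=
  (Finsupp.lift BC.A ℚ (AddCircle (1 : ℚ)) fun r =>
    (n : ℚ)⁻¹ • ∑ᶠ (s : AddCircle (1 : ℚ)) (_ : n • s = r), AddMonoidAlgebra.single s (1 : ℚ)) ∘ₗ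
    (AddMonoidAlgebra.coeffLinearEquiv ℚ).toLinearMap

/-- For `n ≥ 1` and a `ℚ`-algebra homomorphism `χ : ℚ[ℚ/ℤ] → ℂ` with
`χ(e_{1/n}) = 1` (where `1/n` is the class of `n⁻¹ ∈ ℚ` in `ℚ/ℤ`), one has
`χ(ρₙ(e_r)) = χ(e_s)` for every `r` and every `s` with `n • s = r`. -/
lemma BC.intCast_coe_zero (m : ℤ) : (((m : ℚ)) : AddCircle (1 : ℚ)) = 0 := by
  rw [AddCircle.coe_eq_zero_iff]
  exact ⟨m, by rw [zsmul_eq_mul, mul_one]⟩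

theorem BC.comp_rho_eq (n : ℕ) (hn : 1 ≤ n) (χ : BC.A →ₐ[ℚ] ℂ)
    (hχ : χ (AddMonoidAlgebra.single ((((n : ℚ)⁻¹ : ℚ) : AddCircle (1 : ℚ))) (1 : ℚ)) = 1)
    (r s : AddCircle (1 : ℚ)) (hs : n • s = r) :
    χ (BC.rho n (AddMonoidAlgebra.single r (1 : ℚ))) =
      χ (AddMonoidAlgebra.single s (1 : ℚ)) := by
  haveI : NeZero n := ⟨by omega⟩
  have hn0 : (n : ℚ) ≠ 0 := by positivity
  set φ : ZMod n → AddCircle (1 : ℚ) :=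
    fun k => s + (((k.val : ℚ) / n : ℚ) : AddCircle (1 : ℚ)) with hφ
  have hinj : Function.Injective φ := by
    intro k j h
    have h' : (((k.val : ℚ) / n : ℚ) : AddCircle (1 : ℚ)) = (((j.val : ℚ) / n : ℚ) : AddCircle (1 : ℚ)) := by
      simpa [hφ] using h
    have h0 : ((((k.val : ℚ) - j.val) / n : ℚ) : AddCircle (1 : ℚ)) = 0 := by
      rw [sub_div, AddCircle.coe_sub, h', sub_self]
    rw [AddCircle.coe_eq_zero_iff] at h0
    obtain ⟨c, hc⟩ := h0
    rw [zsmul_eq_mul, mul_one, eq_div_iff hn0] at hc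
    have hc' : c * n = (k.val : ℤ) - j.val := by exact_mod_cast hc
    have hdvd : (n : ℤ) ∣ (k.val : ℤ) - j.val := ⟨c, by linarith [hc']⟩
    have hk := ZMod.val_lt k
    have hj := ZMod.val_lt j
    have hz : (k.val : ℤ) - j.val = 0 := Int.eq_zero_of_abs_lt_dvd hdvd (by
      rw [abs_sub_lt_iff]; constructor <;> push_cast <;> omega)
    exact ZMod.val_injective n (by omega)
  have hmem : ∀ k, n • φ k = r := by
    intro k
    have h1 : ((n : ℕ) • ((k.val : ℚ) / n) : ℚ) = ((k.val : ℤ) : ℚ) := by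
      rw [nsmul_eq_mul]; push_cast; field_simp
    rw [hφ]
    simp only [smul_add, hs, ← AddCircle.coe_nsmul, h1, BC.intCast_coe_zero, add_zero]
  have hrange : {t : AddCircle (1 : ℚ) | n • t = r} = Set.range φ := by
    ext t
    constructor
    · intro ht
      obtain ⟨q, hq⟩ := QuotientAddGroup.mk_surjective (t - s)
      have h0 : ((n • q : ℚ) : AddCircle (1 : ℚ)) = 0 := by
        rw [AddCircle.coe_nsmul, hq, smul_sub, ht, hs, sub_self]
      rw [AddCircle.coe_eq_zero_iff] at h0
      obtain ⟨m, hm⟩ := h0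
      rw [zsmul_eq_mul, mul_one, nsmul_eq_mul] at hm
      have hq' : q = m / n := by field_simp; linarith [hm]
      refine ⟨(m : ZMod n), ?_⟩
      have hv : (((m : ZMod n).val : ℤ)) = m % n := ZMod.val_intCast m
      have ht' : t = s + ((q : ℚ) : AddCircle (1 : ℚ)) := by
        rw [hq, add_sub_cancel]
      rw [ht']
      show s + _ = s + _
      congr 1
      have hsub : (((m : ZMod n).val : ℚ) / n - q : ℚ) = (((-(m / n) : ℤ) : ℚ)) := by
        rw [hq']
        have : ((m : ZMod n).val : ℚ) = ((m % n : ℤ) : ℚ) := by exact_mod_cast congrArg (Int.cast : ℤ → ℚ) hv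
        rw [this]
        have hme : n * (m / n) + m % n = m := Int.mul_ediv_add_emod m n
        have hme' : (n : ℚ) * ((m / n : ℤ) : ℚ) + ((m % n : ℤ) : ℚ) = (m : ℚ) := by
          exact_mod_cast hme
        field_simp
        push_cast
        linarith [hme']
      have : ((((m : ZMod n).val : ℚ) / n : ℚ) : AddCircle (1 : ℚ)) - ((q : ℚ) : AddCircle (1 : ℚ)) = 0 := by
        rw [← AddCircle.coe_sub, hsub, BC.intCast_coe_zero]
      rw [sub_eq_zero] at this
      exact this
    · rintro ⟨k, rfl⟩
      exact hmem k
  have hlift : BC.rho n (AddMonoidAlgebra.single r (1 : ℚ)) =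
      (n : ℚ)⁻¹ • ∑ᶠ (t : AddCircle (1 : ℚ)) (_ : n • t = r), AddMonoidAlgebra.single t (1 : ℚ) := by
    simp only [BC.rho]
    erw [Finsupp.lift_apply, Finsupp.sum_single_index, one_smul]
    rw [zero_smul]
  have hfin : (∑ᶠ (t : AddCircle (1 : ℚ)) (_ : n • t = r), AddMonoidAlgebra.single t (1 : ℚ))
      = ∑ k : ZMod n, AddMonoidAlgebra.single (φ k) (1 : ℚ) := by
    have h1 : (∑ᶠ (t : AddCircle (1 : ℚ)) (_ : n • t = r), AddMonoidAlgebra.single t (1 : ℚ))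
        = ∑ᶠ t ∈ {t : AddCircle (1 : ℚ) | n • t = r}, AddMonoidAlgebra.single t (1 : ℚ) := rfl
    rw [h1, hrange, finsum_mem_range hinj, finsum_eq_sum_of_fintype]
  have hterm : ∀ k : ZMod n, χ (AddMonoidAlgebra.single (φ k) (1 : ℚ))
      = χ (AddMonoidAlgebra.single s (1 : ℚ)) := by
    intro k
    have h1 : AddMonoidAlgebra.single (φ k) (1 : ℚ)
        = AddMonoidAlgebra.single s (1 : ℚ) *
          (AddMonoidAlgebra.single ((((n : ℚ)⁻¹ : ℚ) : AddCircle (1 : ℚ))) (1 : ℚ)) ^ k.val := by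
      rw [AddMonoidAlgebra.single_pow, AddMonoidAlgebra.single_mul_single, one_mul, one_pow]
      rw [hφ]
      congr 1
    rw [h1, map_mul, map_pow, hχ, one_pow, mul_one]
  rw [hlift, map_smul, hfin, map_sum]
  simp only [hterm]
  rw [Finset.sum_const, Finset.card_univ, ZMod.card, nsmul_eq_mul, Rat.smul_def]
  have hnC : ((n : ℕ) : ℂ) ≠ 0 := Nat.cast_ne_zero.mpr (by omega)
  push_cast
  rw [inv_mul_cancel_left₀ hnC]
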